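/- With ℬ, σ, ε as above, define J : ℬ → ℬ of degree −1 on generators by J(d_{e,v}) = a'_{e,v} and J(x) = 0 for all other generators, extended by linearity and as an (id, εσ)-derivation. Then ∂J + J∂ = id − εσ on ℬ, i.e. εσ is chain homotopic to the identity, so σ is a quasi-isomorphism. -/

import Mathlib

/-- With `ℬ`, `σ`, `ε` as in Statements 6 and 7, let `J : ℬ → ℬ` be the
degree `-1` linear map determined on generators by `J(d_{e,v}) = a'_{e,v}` and `J = 0` on
all other generators, extended as an `(id, εσ)`-derivation
`J(xy) = J(x)·(εσ)(y) + (−1)^{|x|} x·J(y)`.  Then `∂J + J∂ = id − εσ` on `ℬ`, i.e. `εσ` is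
chain homotopic to the identity; consequently `σ` is a quasi-isomorphism (it induces an
injection and a surjection on cohomology). -/
theorem J_is_chain_homotopy_and_sigma_qiso
    {k BB AG : Type*} [Field k] [Ring BB] [Algebra k BB] [Ring AG] [Algebra k AG]
    (ℬ : ℤ → Submodule k BB) [GradedAlgebra ℬ]
    (𝒢 : ℤ → Submodule k AG) [GradedAlgebra 𝒢] (n : ℤ)
    (V E : Type*) [Fintype E] [DecidableEq V]
    (s t : E → V)
    -- the dg-algebra ℬ
    (idemB : V → BB) (b : V → BB) (a1' a2' d1 d2 hB hsB : E → BB)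
    (hidemBdeg : ∀ v, idemB v ∈ ℬ 0)
    (hbdeg : ∀ v, b v ∈ ℬ (2 - n))
    (ha1'deg : ∀ e, a1' e ∈ ℬ (2 - n)) (ha2'deg : ∀ e, a2' e ∈ ℬ (2 - n))
    (hd1deg : ∀ e, d1 e ∈ ℬ (3 - n)) (hd2deg : ∀ e, d2 e ∈ ℬ (3 - n))
    (hhBdeg : ∀ e, hB e ∈ ℬ 0) (hhsBdeg : ∀ e, hsB e ∈ ℬ (3 - n))
    (hgenB : Algebra.adjoin k
        (Set.range idemB ∪ Set.range b ∪ Set.range a1' ∪ Set.range a2' ∪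
          Set.range d1 ∪ Set.range d2 ∪ Set.range hB ∪ Set.range hsB) = ⊤)
    (dB : BB →ₗ[k] BB)
    (hdBDeg : ∀ i : ℤ, ∀ x ∈ ℬ i, dB x ∈ ℬ (i + 1))
    (hLeibB : ∀ (i : ℤ) (x y : BB), x ∈ ℬ i →
        dB (x * y) = dB x * y + (Int.negOnePow i : ℤ) • (x * dB y))
    (hdBidem : ∀ v, dB (idemB v) = 0)
    (hdBb : ∀ v, dB (b v) =
        (∑ e ∈ Finset.univ.filter (fun e => s e = v), d1 e) +
        (∑ e ∈ Finset.univ.filter (fun e => t e = v), d2 e))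
    (hdBa1' : ∀ e, dB (a1' e) = d1 e - hB e * hsB e)
    (hdBa2' : ∀ e, dB (a2' e) = d2 e + hsB e * hB e)
    (hdBd1 : ∀ e, dB (d1 e) = 0) (hdBd2 : ∀ e, dB (d2 e) = 0)
    (hdBh : ∀ e, dB (hB e) = 0) (hdBhs : ∀ e, dB (hsB e) = 0)
    -- the (n-1)-dimensional Ginzburg algebra 𝒢*_{n-1}(F)
    (idem : V → AG) (gT : E → AG) (gsT : E → AG) (hT : V → AG)
    (hidemdeg : ∀ v, idem v ∈ 𝒢 0)
    (hgTdeg : ∀ e, gT e ∈ 𝒢 0) (hgsTdeg : ∀ e, gsT e ∈ 𝒢 (3 - n))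
    (hhTdeg : ∀ v, hT v ∈ 𝒢 (2 - n))
    (hgenG : Algebra.adjoin k
        (Set.range idem ∪ Set.range gT ∪ Set.range gsT ∪ Set.range hT) = ⊤)
    (dG : AG →ₗ[k] AG)
    (hdGDeg : ∀ i : ℤ, ∀ x ∈ 𝒢 i, dG x ∈ 𝒢 (i + 1))
    (hLeibG : ∀ (i : ℤ) (x y : AG), x ∈ 𝒢 i →
        dG (x * y) = dG x * y + (Int.negOnePow i : ℤ) • (x * dG y))
    (hdGidem : ∀ v, dG (idem v) = 0)
    (hdGg : ∀ e, dG (gT e) = 0) (hdGgs : ∀ e, dG (gsT e) = 0)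
    (hdGh : ∀ v, dG (hT v) =
        (∑ e ∈ Finset.univ.filter (fun e => s e = v), gT e * gsT e) -
        (∑ e ∈ Finset.univ.filter (fun e => t e = v), gsT e * gT e))
    -- the map σ : ℬ → 𝒢*_{n-1}(F), determined by its values on generators
    (σ : BB →ₐ[k] AG)
    (hσidem : ∀ v, σ (idemB v) = idem v)
    (hσb : ∀ v, σ (b v) = hT v)
    (hσa1' : ∀ e, σ (a1' e) = 0) (hσa2' : ∀ e, σ (a2' e) = 0)
    (hσd1 : ∀ e, σ (d1 e) = gT e * gsT e)
    (hσd2 : ∀ e, σ (d2 e) = -(gsT e * gT e))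
    (hσh : ∀ e, σ (hB e) = gT e) (hσhs : ∀ e, σ (hsB e) = gsT e)
    -- the map ε : 𝒢*_{n-1}(F) → ℬ, determined by its values on generators
    (ε : AG →ₐ[k] BB)
    (hεidem : ∀ v, ε (idem v) = idemB v)
    (hεh : ∀ v, ε (hT v) = b v -
        ((∑ e ∈ Finset.univ.filter (fun e => s e = v), a1' e) +
         (∑ e ∈ Finset.univ.filter (fun e => t e = v), a2' e)))
    (hεg : ∀ e, ε (gT e) = hB e) (hεgs : ∀ e, ε (gsT e) = hsB e)
    (hεChain : ∀ x : AG, ε (dG x) = dB (ε x))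
    (hσChain : ∀ x : BB, σ (dB x) = dG (σ x))
    (hσε : ∀ x : AG, σ (ε x) = x)
    -- the homotopy J, determined by its values on generators
    (J : BB →ₗ[k] BB)
    (hJDeg : ∀ i : ℤ, ∀ x ∈ ℬ i, J x ∈ ℬ (i - 1))
    (hJd1 : ∀ e, J (d1 e) = a1' e) (hJd2 : ∀ e, J (d2 e) = a2' e)
    (hJidem : ∀ v, J (idemB v) = 0) (hJb : ∀ v, J (b v) = 0)
    (hJa1' : ∀ e, J (a1' e) = 0) (hJa2' : ∀ e, J (a2' e) = 0)
    (hJh : ∀ e, J (hB e) = 0) (hJhs : ∀ e, J (hsB e) = 0)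
    (hJder : ∀ (i : ℤ) (x y : BB), x ∈ ℬ i →
        J (x * y) = J x * ε (σ y) + (Int.negOnePow i : ℤ) • (x * J y))
    :
    (∀ x : BB, dB (J x) + J (dB x) = x - ε (σ x)) ∧
    -- σ is a quasi-isomorphism: injective and surjective on cohomology
    (∀ x : BB, dB x = 0 → σ x ∈ LinearMap.range dG → x ∈ LinearMap.range dB) ∧
    (∀ z : AG, dG z = 0 → ∃ x : BB, dB x = 0 ∧ σ x - z ∈ LinearMap.range dG) := by
  -- key multiplicative lemma
  have key : ∀ (i : ℤ) (x y : BB), x ∈ ℬ i →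
      dB (J x) + J (dB x) = x - ε (σ x) →
      dB (J y) + J (dB y) = y - ε (σ y) →
      dB (J (x * y)) + J (dB (x * y)) = x * y - ε (σ (x * y)) := by
    intro i x y hxi hx hy
    have hJx : J x ∈ ℬ (i - 1) := hJDeg i x hxi
    have hdx : dB x ∈ ℬ (i + 1) := hdBDeg i x hxi
    set c : ℤ := (Int.negOnePow i : ℤ) with hc
    have h1 : (Int.negOnePow (i + 1) : ℤ) = -c := by
      rw [Int.negOnePow_succ]; push_cast [hc]; ring
    have h2 : (Int.negOnePow (i - 1) : ℤ) = -c := by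
      rw [Int.negOnePow_sub, Int.negOnePow_one]
      push_cast [hc]; ring
    have huu : c * c = 1 := by
      simpa [hc] using congrArg (Units.val) (units_mul_self (Int.negOnePow i))
    have hdbεσ : dB (ε (σ y)) = ε (σ (dB y)) := by rw [← hεChain, hσChain]
    have hDJx : dB (J x) = x - ε (σ x) - J (dB x) := by rw [← hx]; abel
    have hDJy : dB (J y) = y - ε (σ y) - J (dB y) := by rw [← hy]; abel
    rw [hLeibB i x y hxi, hJder i x y hxi, map_add, map_add,
      map_zsmul, map_zsmul,
      hJder (i + 1) (dB x) y hdx, hLeibB (i - 1) (J x) (ε (σ y)) hJx,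
      hJder i x (dB y) hxi, hLeibB i x (J y) hxi, h1, h2, hdbεσ,
      map_mul, map_mul, hDJx, hDJy]
    simp only [smul_add, smul_smul, huu, one_smul, sub_mul, mul_sub, neg_smul]
    have hc2 : c ^ 2 = 1 := by rw [sq]; exact huu
    clear_value c
    match_scalars <;> ring_nf <;> simp [← hc, hc2]
  -- statement P and its proof on all of BB
  have P1 : (1 : BB) ∈ ℬ 0 := SetLike.one_mem_graded _
  have hJ1 : J (1 : BB) = 0 := by
    have h := hJder 0 1 1 P1
    simp only [mul_one, one_mul, map_one, Int.negOnePow_zero, Units.val_one,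
      one_smul] at h
    exact (right_eq_add.mp h)
  have hdB1 : dB (1 : BB) = 0 := by
    have h := hLeibB 0 1 1 P1
    simp only [mul_one, one_mul, Int.negOnePow_zero, Units.val_one, one_smul] at h
    exact (right_eq_add.mp h)
  have main : ∀ x : BB, dB (J x) + J (dB x) = x - ε (σ x) := by
    intro x
    have hx : x ∈ Algebra.adjoin k
        (Set.range idemB ∪ Set.range b ∪ Set.range a1' ∪ Set.range a2' ∪
          Set.range d1 ∪ Set.range d2 ∪ Set.range hB ∪ Set.range hsB) := by
      rw [hgenB]; trivial
    refine (Algebra.adjoin_induction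
      (p := fun z _ => (dB (J z) + J (dB z) = z - ε (σ z)) ∧
        ∀ w, dB (J w) + J (dB w) = w - ε (σ w) →
          dB (J (z * w)) + J (dB (z * w)) = z * w - ε (σ (z * w)))
      ?_ ?_ ?_ ?_ hx).1
    · rintro g (((((((⟨v, rfl⟩ | ⟨v, rfl⟩) | ⟨e, rfl⟩) | ⟨e, rfl⟩) | ⟨e, rfl⟩) |
        ⟨e, rfl⟩) | ⟨e, rfl⟩) | ⟨e, rfl⟩)
      · refine ⟨?_, fun w hw => key 0 _ w (hidemBdeg v) ?_ hw⟩ <;>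
          simp [hJidem, hdBidem, hσidem, hεidem]
      · have hP : dB (J (b v)) + J (dB (b v)) = b v - ε (σ (b v)) := by
          simp [hJb, hdBb, hσb, hεh, map_sum, hJd1, hJd2, sub_sub_cancel]
        exact ⟨hP, fun w hw => key (2 - n) _ w (hbdeg v) hP hw⟩
      · have hz : J (hB e * hsB e) = 0 := by
          rw [hJder 0 _ _ (hhBdeg e), hJh, hJhs]; simp
        have hP : dB (J (a1' e)) + J (dB (a1' e)) = a1' e - ε (σ (a1' e)) := by
          simp [hJa1', hdBa1', hσa1', hz, hJd1]
        exact ⟨hP, fun w hw => key (2 - n) _ w (ha1'deg e) hP hw⟩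
      · have hz : J (hsB e * hB e) = 0 := by
          rw [hJder (3 - n) _ _ (hhsBdeg e), hJhs, hJh]; simp
        have hP : dB (J (a2' e)) + J (dB (a2' e)) = a2' e - ε (σ (a2' e)) := by
          simp [hJa2', hdBa2', hσa2', hz, hJd2]
        exact ⟨hP, fun w hw => key (2 - n) _ w (ha2'deg e) hP hw⟩
      · have hP : dB (J (d1 e)) + J (dB (d1 e)) = d1 e - ε (σ (d1 e)) := by
          simp [hJd1, hdBd1, hdBa1', hσd1, hεg, hεgs]
        exact ⟨hP, fun w hw => key (3 - n) _ w (hd1deg e) hP hw⟩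
      · have hP : dB (J (d2 e)) + J (dB (d2 e)) = d2 e - ε (σ (d2 e)) := by
          simp [hJd2, hdBd2, hdBa2', hσd2, hεg, hεgs, sub_neg_eq_add]
        exact ⟨hP, fun w hw => key (3 - n) _ w (hd2deg e) hP hw⟩
      · refine ⟨?_, fun w hw => key 0 _ w (hhBdeg e) ?_ hw⟩ <;>
          simp [hJh, hdBh, hσh, hεg]
      · refine ⟨?_, fun w hw => key (3 - n) _ w (hhsBdeg e) ?_ hw⟩ <;>
          simp [hJhs, hdBhs, hσhs, hεgs]
    · intro r
      have hP : dB (J ((algebraMap k BB) r)) + J (dB ((algebraMap k BB) r)) =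
          (algebraMap k BB) r - ε (σ ((algebraMap k BB) r)) := by
        rw [Algebra.algebraMap_eq_smul_one]
        simp [LinearMap.map_smul, hJ1, hdB1]
      refine ⟨hP, fun w hw => ?_⟩
      rw [Algebra.algebraMap_eq_smul_one, smul_mul_assoc, one_mul,
        LinearMap.map_smul, LinearMap.map_smul, LinearMap.map_smul,
        LinearMap.map_smul]
      rw [show σ (r • w) = r • σ w from map_smul σ r w,
        show ε (r • σ w) = r • ε (σ w) from map_smul ε r (σ w)]
      rw [← smul_add, hw, smul_sub]
    · rintro z w _ _ ⟨hz1, hz2⟩ ⟨hw1, hw2⟩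
      have hadd : ∀ a b : BB,
          dB (J a) + J (dB a) = a - ε (σ a) →
          dB (J b) + J (dB b) = b - ε (σ b) →
          dB (J (a + b)) + J (dB (a + b)) = (a + b) - ε (σ (a + b)) := by
        intro a b ha hb
        simp only [map_add]
        rw [add_add_add_comm, ha, hb]
        abel
      exact ⟨hadd z w hz1 hw1, fun u hu => by
        rw [add_mul]; exact hadd _ _ (hz2 u hu) (hw2 u hu)⟩
    · rintro z w _ _ ⟨hz1, hz2⟩ ⟨hw1, hw2⟩
      exact ⟨hz2 w hw1, fun u hu => by
        rw [mul_assoc]; exact hz2 _ (hw2 u hu)⟩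
  refine ⟨main, ?_, ?_⟩
  · rintro x hdx ⟨w, hw⟩
    refine ⟨J x + ε w, ?_⟩
    have := main x
    rw [hdx, map_zero, add_zero] at this
    rw [map_add, this, ← hεChain, hw]
    abel
  · intro z hz
    refine ⟨ε z, ?_, ?_⟩
    · rw [← hεChain, hz, map_zero]
    · rw [hσε, sub_self]; exact zero_mem _
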